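/- Let C : PPO_A^I → PPO_A be an arrovian voting system on at least three alternatives, where I may be infinite. Then the collection F of decisive subsets of I is a filter on I, the collection F' of strongly decisive sets is a filter with F' ⊆ F, and if C maps LPO_A^I into LPO_A then F is either the trivial filter 2^I or an ultrafilter on I. Moreover C_{F'} ⊆ C ⊆ C_F (pointwise on profiles), with equality C = C_F iff F = F'. -/
import Mathlib


variable {A I : Type*}

/-- A partial preorder: a reflexive and transitive binary relation. -/
def IsPPO (P : A → A → Prop) : Prop := Reflexive P ∧ Transitive P

/-- A linear (total) preorder: reflexive, transitive and complete. -/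
def IsLPO (P : A → A → Prop) : Prop := Reflexive P ∧ Transitive P ∧ ∀ a b, P a b ∨ P b a

/-- A profile of partial preorders. -/
def IsPPOProfile (P : I → A → A → Prop) : Prop := ∀ i, IsPPO (P i)

/-- A profile of linear (total) preorders. -/
def IsLPOProfile (P : I → A → A → Prop) : Prop := ∀ i, IsLPO (P i)

/-- Strict preference. -/
def StrictPref (P : A → A → Prop) (a b : A) : Prop := P a b ∧ ¬ P b a

/-- Indifference. -/
def Indiff (P : A → A → Prop) (a b : A) : Prop := P a b ∧ P b a

/-- The set `A` contains at least three distinct alternatives. -/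
def ThreeAlts (A : Type*) : Prop := ∃ a b c : A, a ≠ b ∧ b ≠ c ∧ a ≠ c

/-- Unanimity. -/
def Unanimity (C : (I → A → A → Prop) → A → A → Prop) : Prop :=
  ∀ P, IsPPOProfile P → ∀ a b : A, (∀ i, P i a b) → C P a b

/-- Independence of irrelevant alternatives. -/
def IIA (C : (I → A → A → Prop) → A → A → Prop) : Prop :=
  ∀ P P' : I → A → A → Prop, IsPPOProfile P → IsPPOProfile P' → ∀ a b : A,
    {i | P i a b} = {i | P' i a b} → {i | P i b a} = {i | P' i b a} →
    (C P a b ↔ C P' a b)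

/-- Neutrality: `C (ρ*P) = ρ*(C P)` for every permutation `ρ` of the alternatives. -/
def Neutrality (C : (I → A → A → Prop) → A → A → Prop) : Prop :=
  ∀ (ρ : Equiv.Perm A) (P : I → A → A → Prop), IsPPOProfile P →
    ∀ x y : A, C (fun i a b => P i (ρ.symm a) (ρ.symm b)) x y ↔ C P (ρ.symm x) (ρ.symm y)

/-- Monotonicity. -/
def Monotonicity (C : (I → A → A → Prop) → A → A → Prop) : Prop :=
  ∀ P P' : I → A → A → Prop, IsPPOProfile P → IsPPOProfile P' → ∀ a b : A,
    {i | P i a b} ⊆ {i | P' i a b} → {i | P' i b a} ⊆ {i | P i b a} →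
    C P a b → C P' a b

/-- `J` is a decisive set: unanimous strict preference on `J` forces weak aggregate preference. -/
def Decisive (C : (I → A → A → Prop) → A → A → Prop) (J : Set I) : Prop :=
  ∀ P, IsPPOProfile P → ∀ a b : A, (∀ j ∈ J, StrictPref (P j) a b) → C P a b

/-- `J` is a strongly decisive set: unanimous weak preference on `J` forces weak aggregate preference. -/
def SDecisive (C : (I → A → A → Prop) → A → A → Prop) (J : Set I) : Prop :=
  ∀ P, IsPPOProfile P → ∀ a b : A, (∀ j ∈ J, P j a b) → C P a b

set_option linter.unusedVariables false

/- ### auxiliary gadget -/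

def G3 (a b c : A) (p1 p2 p3 p4 p5 p6 : Prop) : A → A → Prop :=
  fun x y => x = y ∨ (x = a ∧ y = b ∧ p1) ∨ (x = b ∧ y = a ∧ p2) ∨ (x = a ∧ y = c ∧ p3)
    ∨ (x = c ∧ y = a ∧ p4) ∨ (x = b ∧ y = c ∧ p5) ∨ (x = c ∧ y = b ∧ p6)

set_option maxHeartbeats 1000000 in
lemma G3_ppo {a b c : A} {p1 p2 p3 p4 p5 p6 : Prop}
    (hab : a ≠ b) (hac : a ≠ c) (hbc : b ≠ c)
    (h1 : p1 ∧ p5 → p3) (h2 : p3 ∧ p6 → p1) (h3 : p2 ∧ p3 → p5) (h4 : p5 ∧ p4 → p2)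
    (h5 : p4 ∧ p1 → p6) (h6 : p6 ∧ p2 → p4) :
    IsPPO (G3 a b c p1 p2 p3 p4 p5 p6) := by
  constructor
  · intro x; exact Or.inl rfl
  · rintro x y z hxy hyz
    rcases hxy with rfl | ⟨hx,hy,h⟩|⟨hx,hy,h⟩|⟨hx,hy,h⟩|⟨hx,hy,h⟩|⟨hx,hy,h⟩|⟨hx,hy,h⟩
    · exact hyz
    all_goals rcases hyz with rfl|⟨hx',hy',h'⟩|⟨hx',hy',h'⟩|⟨hx',hy',h'⟩|⟨hx',hy',h'⟩|⟨hx',hy',h'⟩|⟨hx',hy',h'⟩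
    all_goals subst_vars
    all_goals simp_all [G3]

lemma G3_ab {a b c : A} {p1 p2 p3 p4 p5 p6 : Prop} (hab : a ≠ b) (hac : a ≠ c) (hbc : b ≠ c) :
    G3 a b c p1 p2 p3 p4 p5 p6 a b ↔ p1 := by
  simp [G3, hab, hac, hbc, hab.symm, hac.symm, hbc.symm]
lemma G3_ba {a b c : A} {p1 p2 p3 p4 p5 p6 : Prop} (hab : a ≠ b) (hac : a ≠ c) (hbc : b ≠ c) :
    G3 a b c p1 p2 p3 p4 p5 p6 b a ↔ p2 := by
  simp [G3, hab, hac, hbc, hab.symm, hac.symm, hbc.symm]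
lemma G3_ac {a b c : A} {p1 p2 p3 p4 p5 p6 : Prop} (hab : a ≠ b) (hac : a ≠ c) (hbc : b ≠ c) :
    G3 a b c p1 p2 p3 p4 p5 p6 a c ↔ p3 := by
  simp [G3, hab, hac, hbc, hab.symm, hac.symm, hbc.symm]
lemma G3_ca {a b c : A} {p1 p2 p3 p4 p5 p6 : Prop} (hab : a ≠ b) (hac : a ≠ c) (hbc : b ≠ c) :
    G3 a b c p1 p2 p3 p4 p5 p6 c a ↔ p4 := by
  simp [G3, hab, hac, hbc, hab.symm, hac.symm, hbc.symm]
lemma G3_bc {a b c : A} {p1 p2 p3 p4 p5 p6 : Prop} (hab : a ≠ b) (hac : a ≠ c) (hbc : b ≠ c) :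
    G3 a b c p1 p2 p3 p4 p5 p6 b c ↔ p5 := by
  simp [G3, hab, hac, hbc, hab.symm, hac.symm, hbc.symm]
lemma G3_cb {a b c : A} {p1 p2 p3 p4 p5 p6 : Prop} (hab : a ≠ b) (hac : a ≠ c) (hbc : b ≠ c) :
    G3 a b c p1 p2 p3 p4 p5 p6 c b ↔ p6 := by
  simp [G3, hab, hac, hbc, hab.symm, hac.symm, hbc.symm]

/-- third element distinct from two given ones -/
lemma thirdAlt (hA : ThreeAlts A) (a b : A) : ∃ c : A, c ≠ a ∧ c ≠ b := by
  obtain ⟨x, y, z, hxy, hyz, hxz⟩ := hA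
  by_cases h1 : x ≠ a ∧ x ≠ b
  · exact ⟨x, h1.1, h1.2⟩
  by_cases h2 : y ≠ a ∧ y ≠ b
  · exact ⟨y, h2.1, h2.2⟩
  push_neg at h1 h2
  refine ⟨z, ?_, ?_⟩ <;> intro h <;> subst h
  · rcases Classical.em (x = z) with h | h
    · exact hxz h
    · have hx := h1 h
      have : y = z ∨ y = b := by
        rcases Classical.em (y = z) with h' | h'
        · exact Or.inl h'
        · exact Or.inr (h2 h')
      rcases this with h' | h'
      · exact hyz h'
      · exact hxy (hx.trans h'.symm)
  · rcases Classical.em (x = a) with h | h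
    · have hy : y = a ∨ y = z := by
        rcases Classical.em (y = a) with h' | h'
        · exact Or.inl h'
        · exact Or.inr (h2 h')
      rcases hy with h' | h'
      · exact hxy (h.trans h'.symm)
      · exact hyz h'
    · exact hxz (h1 h)

/-- pattern-rigid decisiveness: `J` strictly prefers `x` to `y`, everyone else is
incomparable on `{x,y}`. -/
def Dinc (C : (I → A → A → Prop) → A → A → Prop) (J : Set I) (x y : A) : Prop :=
  ∀ Q : I → A → A → Prop, IsPPOProfile Q → {i | Q i x y} = J →
    {i | Q i y x} = (∅ : Set I) → C Q x y

section Core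

variable {C : (I → A → A → Prop) → A → A → Prop}

lemma dinc_sub1 (hC : ∀ P, IsPPOProfile P → IsPPO (C P)) (hU : Unanimity C) (hIIA : IIA C)
    {J : Set I} {x y z : A} (hxy : x ≠ y) (hzx : z ≠ x) (hzy : z ≠ y)
    (h : Dinc C J x y) : Dinc C J x z := by
  classical
  intro Q hQ hQ1 hQ2
  have hxz : x ≠ z := hzx.symm
  have hyz : y ≠ z := hzy.symm
  set R : I → A → A → Prop := fun i => if i ∈ J then G3 x y z True False True False True False
    else G3 x y z False False False False True False with hR
  have hRP : IsPPOProfile R := by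
    intro i
    by_cases hi : i ∈ J <;>
      simp only [hR, hi, if_true, if_false] <;>
      exact G3_ppo hxy hxz hyz (by tauto) (by tauto) (by tauto) (by tauto) (by tauto) (by tauto)
  have hCxy : C R x y := by
    apply h R hRP
    · ext i; by_cases hi : i ∈ J <;> simp [hR, hi, G3_ab hxy hxz hyz]
    · ext i; by_cases hi : i ∈ J <;> simp [hR, hi, G3_ba hxy hxz hyz]
  have hCyz : C R y z :=
    hU R hRP y z (fun i => by by_cases hi : i ∈ J <;> simp [hR, hi, G3_bc hxy hxz hyz])
  have hCxz := (hC R hRP).2 hCxy hCyz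
  have e1 : {i | R i x z} = {i | Q i x z} := by
    rw [hQ1]; ext i; by_cases hi : i ∈ J <;> simp [hR, hi, G3_ac hxy hxz hyz]
  have e2 : {i | R i z x} = {i | Q i z x} := by
    rw [hQ2]; ext i; by_cases hi : i ∈ J <;> simp [hR, hi, G3_ca hxy hxz hyz]
  exact (hIIA R Q hRP hQ x z e1 e2).mp hCxz

lemma dinc_sub2 (hC : ∀ P, IsPPOProfile P → IsPPO (C P)) (hU : Unanimity C) (hIIA : IIA C)
    {J : Set I} {x y z : A} (hxy : x ≠ y) (hzx : z ≠ x) (hzy : z ≠ y)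
    (h : Dinc C J x y) : Dinc C J z y := by
  classical
  intro Q hQ hQ1 hQ2
  set R : I → A → A → Prop := fun i => if i ∈ J then G3 z x y True False True False True False
    else G3 z x y True False False False False False with hR
  have hRP : IsPPOProfile R := by
    intro i
    by_cases hi : i ∈ J <;>
      simp only [hR, hi, if_true, if_false] <;>
      exact G3_ppo hzx hzy hxy (by tauto) (by tauto) (by tauto) (by tauto) (by tauto) (by tauto)
  have hCzx : C R z x :=
    hU R hRP z x (fun i => by by_cases hi : i ∈ J <;> simp [hR, hi, G3_ab hzx hzy hxy])
  have hCxy : C R x y := by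
    apply h R hRP
    · ext i; by_cases hi : i ∈ J <;> simp [hR, hi, G3_bc hzx hzy hxy]
    · ext i; by_cases hi : i ∈ J <;> simp [hR, hi, G3_cb hzx hzy hxy]
  have hCzy := (hC R hRP).2 hCzx hCxy
  have e1 : {i | R i z y} = {i | Q i z y} := by
    rw [hQ1]; ext i; by_cases hi : i ∈ J <;> simp [hR, hi, G3_ac hzx hzy hxy]
  have e2 : {i | R i y z} = {i | Q i y z} := by
    rw [hQ2]; ext i; by_cases hi : i ∈ J <;> simp [hR, hi, G3_ca hzx hzy hxy]
  exact (hIIA R Q hRP hQ z y e1 e2).mp hCzy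

lemma dinc_swap (hA : ThreeAlts A)
    (hC : ∀ P, IsPPOProfile P → IsPPO (C P)) (hU : Unanimity C) (hIIA : IIA C)
    {J : Set I} {x y : A} (hxy : x ≠ y) (h : Dinc C J x y) : Dinc C J y x := by
  obtain ⟨w, hwx, hwy⟩ := thirdAlt hA x y
  have h1 : Dinc C J x w := dinc_sub1 hC hU hIIA hxy hwx hwy h
  have h2 : Dinc C J y w := dinc_sub2 hC hU hIIA (Ne.symm hwx) hxy.symm hwy.symm h1
  exact dinc_sub1 hC hU hIIA (Ne.symm hwy) hxy hwx.symm h2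

lemma dinc_spread (hA : ThreeAlts A)
    (hC : ∀ P, IsPPOProfile P → IsPPO (C P)) (hU : Unanimity C) (hIIA : IIA C)
    {J : Set I} {x y : A} (hxy : x ≠ y) (h : Dinc C J x y) :
    ∀ u v : A, u ≠ v → Dinc C J u v := by
  intro u v huv
  by_cases hvy : v = y
  · rw [hvy]
    by_cases hux : u = x
    · rw [hux]; exact h
    · exact dinc_sub2 hC hU hIIA hxy hux (hvy ▸ huv) h
  · by_cases hvx : v = x
    · rw [hvx]
      have hyx : Dinc C J y x := dinc_swap hA hC hU hIIA hxy h
      by_cases huy : u = y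
      · rw [huy]; exact hyx
      · exact dinc_sub2 hC hU hIIA hxy.symm huy (hvx ▸ huv) hyx
    · have hxv : Dinc C J x v := dinc_sub1 hC hU hIIA hxy hvx hvy h
      by_cases hux : u = x
      · rw [hux]; exact hxv
      · by_cases huy : u = y
        · rw [huy]; exact dinc_sub2 hC hU hIIA (Ne.symm hvx) hxy.symm (Ne.symm hvy) hxv
        · exact dinc_sub2 hC hU hIIA (Ne.symm hvx) hux huv hxv

lemma dinc_step1 (hC : ∀ P, IsPPOProfile P → IsPPO (C P)) (hU : Unanimity C) (hIIA : IIA C)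
    {P : I → A → A → Prop} (hP : IsPPOProfile P) {a b c : A}
    (hab : a ≠ b) (hca : c ≠ a) (hcb : c ≠ b)
    (h : C P a b) : Dinc C {i | P i a b} c b := by
  classical
  intro Q hQ hQ1 hQ2
  have hac : a ≠ c := hca.symm
  have hbc : b ≠ c := hcb.symm
  set R : I → A → A → Prop := fun i =>
    if P i a b then G3 a b c (P i a b) (P i b a) False True False True
    else G3 a b c (P i a b) (P i b a) False True False False with hR
  have hRP : IsPPOProfile R := by
    intro i
    by_cases hi : P i a b <;>
      simp only [hR, hi, if_true, if_false] <;>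
      exact G3_ppo hab hac hbc (by tauto) (by tauto) (by tauto) (by tauto) (by tauto) (by tauto)
  have hCca : C R c a :=
    hU R hRP c a (fun i => by by_cases hi : P i a b <;> simp [hR, hi, G3_ca hab hac hbc])
  have hCab : C R a b := by
    refine (hIIA P R hP hRP a b ?_ ?_).mp h
    · ext i; by_cases hi : P i a b <;> simp [hR, hi, G3_ab hab hac hbc]
    · ext i; by_cases hi : P i a b <;> simp [hR, hi, G3_ba hab hac hbc]
  have hCcb := (hC R hRP).2 hCca hCab
  have e1 : {i | R i c b} = {i | Q i c b} := by
    rw [hQ1]; ext i; by_cases hi : P i a b <;> simp [hR, hi, G3_cb hab hac hbc]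
  have e2 : {i | R i b c} = {i | Q i b c} := by
    rw [hQ2]; ext i; by_cases hi : P i a b <;> simp [hR, hi, G3_bc hab hac hbc]
  exact (hIIA R Q hRP hQ c b e1 e2).mp hCcb

lemma dec_univ (hU : Unanimity C) : Decisive C (Set.univ : Set I) :=
  fun P hP a b hs => hU P hP a b (fun i => (hs i (Set.mem_univ i)).1)

lemma dec_of_dinc (hA : ThreeAlts A)
    (hC : ∀ P, IsPPOProfile P → IsPPO (C P)) (hU : Unanimity C) (hIIA : IIA C)
    {J : Set I} (h : ∀ u v : A, u ≠ v → Dinc C J u v) : Decisive C J := by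
  classical
  intro P hP a b hs
  by_cases hab : a = b
  · rw [hab]; exact (hC P hP).1 b
  obtain ⟨w, hwa, hwb⟩ := thirdAlt hA a b
  have haw : a ≠ w := hwa.symm
  have hbw : b ≠ w := hwb.symm
  set R : I → A → A → Prop := fun i =>
    if i ∈ J then G3 a b w True False True False False True
    else G3 a b w (P i a b) (P i b a) False False False False with hR
  have hRP : IsPPOProfile R := by
    intro i
    by_cases hi : i ∈ J <;>
      simp only [hR, hi, if_true, if_false] <;>
      exact G3_ppo hab haw hbw (by tauto) (by tauto) (by tauto) (by tauto) (by tauto) (by tauto)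
  have hCaw : C R a w := by
    apply h a w haw R hRP
    · ext i; by_cases hi : i ∈ J <;> simp [hR, hi, G3_ac hab haw hbw]
    · ext i; by_cases hi : i ∈ J <;> simp [hR, hi, G3_ca hab haw hbw]
  have hCwb : C R w b := by
    apply h w b hwb R hRP
    · ext i; by_cases hi : i ∈ J <;> simp [hR, hi, G3_cb hab haw hbw]
    · ext i; by_cases hi : i ∈ J <;> simp [hR, hi, G3_bc hab haw hbw]
  have hCab := (hC R hRP).2 hCaw hCwb
  refine (hIIA R P hRP hP a b ?_ ?_).mp hCab
  · ext i
    by_cases hi : i ∈ J <;> simp [hR, hi, G3_ab hab haw hbw]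
    exact (hs i hi).1
  · ext i
    by_cases hi : i ∈ J <;> simp [hR, hi, G3_ba hab haw hbw]
    exact (hs i hi).2

/-- The key lemma: whenever `C P a b` holds, the set of voters weakly preferring
`a` to `b` is decisive. -/
lemma dec_of_C (hA : ThreeAlts A)
    (hC : ∀ P, IsPPOProfile P → IsPPO (C P)) (hU : Unanimity C) (hIIA : IIA C)
    {P : I → A → A → Prop} (hP : IsPPOProfile P) {a b : A}
    (h : C P a b) : Decisive C {i | P i a b} := by
  by_cases hab : a = b
  · subst hab
    have huniv : {i | P i a a} = (Set.univ : Set I) :=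
      Set.ext (fun i => by simp [(hP i).1 a])
    rw [huniv]
    exact dec_univ hU
  obtain ⟨c, hca, hcb⟩ := thirdAlt hA a b
  have h1 : Dinc C {i | P i a b} c b := dinc_step1 hC hU hIIA hP hab hca hcb h
  exact dec_of_dinc hA hC hU hIIA (dinc_spread hA hC hU hIIA hcb h1)

lemma dec_inter (hA : ThreeAlts A)
    (hC : ∀ P, IsPPOProfile P → IsPPO (C P)) (hU : Unanimity C) (hIIA : IIA C)
    {J K : Set I} (hJ : Decisive C J) (hK : Decisive C K) : Decisive C (J ∩ K) := by
  classical
  intro P hP a b hs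
  by_cases hab : a = b
  · rw [hab]; exact (hC P hP).1 b
  obtain ⟨c, hca, hcb⟩ := thirdAlt hA a b
  have hac : a ≠ c := hca.symm
  have hbc : b ≠ c := hcb.symm
  set R : I → A → A → Prop := fun i =>
    if i ∈ J ∩ K then G3 a b c (P i a b) (P i b a) True False False True
    else if i ∈ J then G3 a b c (P i a b) (P i b a) True False True False
    else if i ∈ K then G3 a b c (P i a b) (P i b a) False True False True
    else G3 a b c (P i a b) (P i b a) False False False False with hR
  have hRP : IsPPOProfile R := by
    intro i
    by_cases hi : i ∈ J ∩ K
    · have h1 : P i a b := (hs i hi).1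
      have h2 : ¬ P i b a := (hs i hi).2
      simp only [hR, hi, if_true]
      exact G3_ppo hab hac hbc (by tauto) (by tauto) (by tauto) (by tauto) (by tauto) (by tauto)
    · by_cases hiJ : i ∈ J <;> by_cases hiK : i ∈ K <;>
        simp only [hR, hi, hiJ, hiK, if_true, if_false] <;>
        exact G3_ppo hab hac hbc (by tauto) (by tauto) (by tauto) (by tauto) (by tauto) (by tauto)
  have hCac : C R a c := by
    apply hJ R hRP a c
    intro j hj
    constructor
    · by_cases hi : j ∈ J ∩ K <;> by_cases hiK : j ∈ K <;>
        simp [hR, hi, hj, hiK, G3_ac hab hac hbc]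
    · by_cases hi : j ∈ J ∩ K <;> by_cases hiK : j ∈ K <;>
        simp [hR, hi, hj, hiK, G3_ca hab hac hbc]
  have hCcb : C R c b := by
    apply hK R hRP c b
    intro j hj
    constructor
    · by_cases hi : j ∈ J ∩ K <;> by_cases hiJ : j ∈ J <;>
        simp [hR, hi, hj, hiJ, G3_cb hab hac hbc]
    · by_cases hi : j ∈ J ∩ K <;> by_cases hiJ : j ∈ J <;>
        simp [hR, hi, hj, hiJ, G3_bc hab hac hbc]
  have hCab := (hC R hRP).2 hCac hCcb
  refine (hIIA R P hRP hP a b ?_ ?_).mp hCab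
  · ext i
    by_cases hi : i ∈ J ∩ K <;> by_cases hiJ : i ∈ J <;> by_cases hiK : i ∈ K <;>
      simp [hR, hi, hiJ, hiK, G3_ab hab hac hbc]
  · ext i
    by_cases hi : i ∈ J ∩ K <;> by_cases hiJ : i ∈ J <;> by_cases hiK : i ∈ K <;>
      simp [hR, hi, hiJ, hiK, G3_ba hab hac hbc]

lemma sdec_inter (hA : ThreeAlts A)
    (hC : ∀ P, IsPPOProfile P → IsPPO (C P)) (hU : Unanimity C) (hIIA : IIA C)
    {J K : Set I} (hJ : SDecisive C J) (hK : SDecisive C K) : SDecisive C (J ∩ K) := by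
  classical
  intro P hP a b hs
  by_cases hab : a = b
  · rw [hab]; exact (hC P hP).1 b
  obtain ⟨c, hca, hcb⟩ := thirdAlt hA a b
  have hac : a ≠ c := hca.symm
  have hbc : b ≠ c := hcb.symm
  set R : I → A → A → Prop := fun i =>
    if i ∈ J ∩ K then G3 a b c (P i a b) (P i b a) (P i a b) (P i b a) True True
    else if i ∈ J then G3 a b c (P i a b) (P i b a) True False True False
    else if i ∈ K then G3 a b c (P i a b) (P i b a) False True False True
    else G3 a b c (P i a b) (P i b a) False False False False with hR
  have hRP : IsPPOProfile R := by
    intro i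
    by_cases hi : i ∈ J ∩ K
    · simp only [hR, hi, if_true]
      exact G3_ppo hab hac hbc (by tauto) (by tauto) (by tauto) (by tauto) (by tauto) (by tauto)
    · by_cases hiJ : i ∈ J <;> by_cases hiK : i ∈ K <;>
        simp only [hR, hi, hiJ, hiK, if_true, if_false] <;>
        exact G3_ppo hab hac hbc (by tauto) (by tauto) (by tauto) (by tauto) (by tauto) (by tauto)
  have hCac : C R a c := by
    apply hJ R hRP a c
    intro j hj
    by_cases hi : j ∈ J ∩ K
    · simp only [hR, hi, if_true]
      rw [G3_ac hab hac hbc]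
      exact hs j hi
    · by_cases hiK : j ∈ K
      · exact absurd ⟨hj, hiK⟩ hi
      · simp [hR, hi, hj, hiK, G3_ac hab hac hbc]
  have hCcb : C R c b := by
    apply hK R hRP c b
    intro j hj
    by_cases hi : j ∈ J ∩ K
    · simp only [hR, hi, if_true]
      rw [G3_cb hab hac hbc]
      trivial
    · by_cases hiJ : j ∈ J
      · exact absurd ⟨hiJ, hj⟩ hi
      · simp [hR, hi, hiJ, hj, G3_cb hab hac hbc]
  have hCab := (hC R hRP).2 hCac hCcb
  refine (hIIA R P hRP hP a b ?_ ?_).mp hCab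
  · ext i
    by_cases hi : i ∈ J ∩ K <;> by_cases hiJ : i ∈ J <;> by_cases hiK : i ∈ K <;>
      simp [hR, hi, hiJ, hiK, G3_ab hab hac hbc]
  · ext i
    by_cases hi : i ∈ J ∩ K <;> by_cases hiJ : i ∈ J <;> by_cases hiK : i ∈ K <;>
      simp [hR, hi, hiJ, hiK, G3_ba hab hac hbc]

/-- the linear preorder with `t` strictly on top and all other alternatives indifferent. -/
def topRel (t : A) : A → A → Prop := fun x y => y ≠ t ∨ x = t

lemma topRel_lpo (t : A) : IsLPO (topRel t) := by
  refine ⟨fun x => ?_, fun x y z hxy hyz => ?_, fun x y => ?_⟩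
  · by_cases h : x = t
    · exact Or.inr h
    · exact Or.inl h
  · rcases hyz with h | h
    · exact Or.inl h
    · rcases hxy with h' | h'
      · exact absurd h h'
      · exact Or.inr h'
  · by_cases h : y = t
    · by_cases h' : x = t
      · exact Or.inl (Or.inr h')
      · exact Or.inr (Or.inl h')
    · exact Or.inl (Or.inl h)

end Core


theorem filter_of_decisive_sets (C : (I → A → A → Prop) → A → A → Prop)
    (hA : ThreeAlts A)
    (hC : ∀ P, IsPPOProfile P → IsPPO (C P))
    (hU : Unanimity C) (hIIA : IIA C) :
    (Decisive C Set.univ ∧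
      (∀ J K : Set I, J ⊆ K → Decisive C J → Decisive C K) ∧
      (∀ J K : Set I, Decisive C J → Decisive C K → Decisive C (J ∩ K))) ∧
    (SDecisive C Set.univ ∧
      (∀ J K : Set I, J ⊆ K → SDecisive C J → SDecisive C K) ∧
      (∀ J K : Set I, SDecisive C J → SDecisive C K → SDecisive C (J ∩ K))) ∧
    (∀ J : Set I, SDecisive C J → Decisive C J) ∧
    ((∀ P : I → A → A → Prop, IsLPOProfile P → IsLPO (C P)) →
      (∀ J : Set I, Decisive C J) ∨
      (¬ Decisive C (∅ : Set I) ∧ ∀ K : Set I, Decisive C K ∨ Decisive C Kᶜ)) ∧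
    (∀ P : I → A → A → Prop, IsPPOProfile P → ∀ a b : A,
      (∃ J : Set I, SDecisive C J ∧ ∀ j ∈ J, P j a b) → C P a b) ∧
    (∀ P : I → A → A → Prop, IsPPOProfile P → ∀ a b : A,
      C P a b → ∃ J : Set I, Decisive C J ∧ ∀ j ∈ J, P j a b) ∧
    ((∀ P : I → A → A → Prop, IsPPOProfile P → ∀ a b : A,
        C P a b ↔ ∃ J : Set I, Decisive C J ∧ ∀ j ∈ J, P j a b) ↔
      (∀ J : Set I, Decisive C J ↔ SDecisive C J)) := by
  classical
  refine ⟨⟨dec_univ hU,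
      fun J K hJK hJ P hP a b hs => hJ P hP a b (fun j hj => hs j (hJK hj)),
      fun J K hJ hK => dec_inter hA hC hU hIIA hJ hK⟩,
    ⟨fun P hP a b h => hU P hP a b (fun i => h i (Set.mem_univ i)),
      fun J K hJK hJ P hP a b hs => hJ P hP a b (fun j hj => hs j (hJK hj)),
      fun J K hJ hK => sdec_inter hA hC hU hIIA hJ hK⟩,
    fun J h P hP a b hs => h P hP a b (fun j hj => (hs j hj).1),
    ?_, ?_, ?_, ?_⟩
  · -- LPO : trivial filter or ultrafilter
    intro hLPO
    by_cases hempty : Decisive C (∅ : Set I)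
    · exact Or.inl (fun J P hP a b hs =>
        hempty P hP a b (fun j hj => absurd hj (Set.notMem_empty j)))
    · refine Or.inr ⟨hempty, fun K => ?_⟩
      obtain ⟨a, b, c, hab, hbc, hac⟩ := id hA
      set P : I → A → A → Prop := fun i => if i ∈ K then topRel a else topRel b with hPdef
      have hPL : IsLPOProfile P := fun i => by
        by_cases hi : i ∈ K <;> simp only [hPdef, hi, if_true, if_false] <;> exact topRel_lpo _
      have hPP : IsPPOProfile P := fun i => ⟨(hPL i).1, (hPL i).2.1⟩
      rcases (hLPO P hPL).2.2 a b with h | h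
      · left
        have hd := dec_of_C hA hC hU hIIA hPP h
        have hKe : {i | P i a b} = K := by
          ext i; by_cases hi : i ∈ K <;> simp [hPdef, hi, topRel, hab, hab.symm]
        rwa [hKe] at hd
      · right
        have hd := dec_of_C hA hC hU hIIA hPP h
        have hKe : {i | P i b a} = Kᶜ := by
          ext i; by_cases hi : i ∈ K <;> simp [hPdef, hi, topRel, hab, hab.symm]
        rwa [hKe] at hd
  · -- C_{F'} ⊆ C
    rintro P hP a b ⟨J, hJ, hall⟩
    exact hJ P hP a b hall
  · -- C ⊆ C_F
    intro P hP a b h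
    exact ⟨{i | P i a b}, dec_of_C hA hC hU hIIA hP h, fun j hj => hj⟩
  · -- C = C_F ↔ F = F'
    constructor
    · intro hL J
      constructor
      · intro hJdec P hP a b hall
        exact (hL P hP a b).mpr ⟨J, hJdec, hall⟩
      · intro hJs P hP a b hs
        exact hJs P hP a b (fun j hj => (hs j hj).1)
    · intro hR P hP a b
      constructor
      · intro h
        exact ⟨{i | P i a b}, dec_of_C hA hC hU hIIA hP h, fun j hj => hj⟩
      · rintro ⟨J, hJ, hall⟩
        exact ((hR J).mp hJ) P hP a b hall
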